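/- Let P = (A,B,R), P' = (A',B',R'), Q = (C,B,T) and Q' = (C',B',T') be relations, and suppose there is a partial order ⪯ on B that is both downwards P-compatible and upwards Q-compatible. If TWO has a winning strategy in the game G_fin(Dom(P'), Dom(Q')) and S_fin(Dom(P), Dom(Q)) holds, then S_fin(Dom(P⊗P'), Dom(Q⊗Q')) holds. -/

import Mathlib

open Set

/-- `GDom R` is the set of dominating families of the relation `R`:
sets `Z ⊆ B` such that every `a ∈ A` is dominated by some `b ∈ Z`. -/
def GDom {α β : Type*} (R : α → β → Prop) : Set (Set β) :=
  {Z | ∀ a : α, ∃ b ∈ Z, R a b}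

/-- A relation is total: every element of the domain is dominated by something. -/
def IsTotalRel {α β : Type*} (R : α → β → Prop) : Prop :=
  ∀ a : α, ∃ b : β, R a b

/-- The product of two relations. -/
def GProd {α β α' β' : Type*} (R : α → β → Prop) (R' : α' → β' → Prop) :
    α × α' → β × β' → Prop :=
  fun a b => R a.1 b.1 ∧ R' a.2 b.2

/-- The finite history consisting of the first `n` moves of the sequence `b`. -/
def GHist {β : Type*} (b : ℕ → β) (n : ℕ) : List β :=
  List.ofFn fun i : Fin n => b i

/-- ONE has a winning strategy in the game `G(P,Q)`: in inning `n` ONE plays `aₙ ∈ A`,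
TWO answers `bₙ` with `R aₙ bₙ`; ONE wins iff `{bₙ : n} ∈ GDom T`. -/
def OneWinsG {α β γ : Type*} (R : α → β → Prop) (T : γ → β → Prop) : Prop :=
  ∃ σ : List β → α, ∀ b : ℕ → β,
    (∀ n, R (σ (GHist b n)) (b n)) → Set.range b ∈ GDom T

/-- TWO has a winning strategy in the game `G(P,Q)`. -/
def TwoWinsG {α β γ : Type*} (R : α → β → Prop) (T : γ → β → Prop) : Prop :=
  ∃ τ : List α → β, ∀ a : ℕ → α,
    (∀ n, R (a n) (τ (GHist a (n + 1)))) ∧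
    Set.range (fun n => τ (GHist a (n + 1))) ∉ GDom T

/-- ONE has a winning strategy in the game `G₁(𝒜,ℬ)`: in inning `n` ONE plays `Aₙ ∈ 𝒜`,
TWO answers `bₙ ∈ Aₙ`; TWO wins iff `{bₙ : n} ∈ ℬ`. -/
def OneWinsG1 {β : Type*} (𝒜 ℬ : Set (Set β)) : Prop :=
  ∃ σ : List β → Set β, (∀ h, σ h ∈ 𝒜) ∧
    ∀ b : ℕ → β, (∀ n, b n ∈ σ (GHist b n)) → Set.range b ∉ ℬ

/-- TWO has a winning strategy in the game `G₁(𝒜,ℬ)`. -/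
def TwoWinsG1 {β : Type*} (𝒜 ℬ : Set (Set β)) : Prop :=
  ∃ τ : List (Set β) → β, ∀ S : ℕ → Set β, (∀ n, S n ∈ 𝒜) →
    (∀ n, τ (GHist S (n + 1)) ∈ S n) ∧
    Set.range (fun n => τ (GHist S (n + 1))) ∈ ℬ

/-- TWO has a winning strategy in the game `G_fin(𝒜,ℬ)`: in inning `n` ONE plays `Aₙ ∈ 𝒜`,
TWO answers a finite `Fₙ ⊆ Aₙ`; TWO wins iff `⋃ₙ Fₙ ∈ ℬ`. -/
def TwoWinsGfin {β : Type*} (𝒜 ℬ : Set (Set β)) : Prop :=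
  ∃ τ : List (Set β) → Set β, ∀ S : ℕ → Set β, (∀ n, S n ∈ 𝒜) →
    (∀ n, τ (GHist S (n + 1)) ⊆ S n ∧ (τ (GHist S (n + 1))).Finite) ∧
    (⋃ n, τ (GHist S (n + 1))) ∈ ℬ

/-- `(𝒜,ℬ)`-Lindelöf: every member of `𝒜` has a countable subset belonging to `ℬ`. -/
def LindelofFam {β : Type*} (𝒜 ℬ : Set (Set β)) : Prop :=
  ∀ S ∈ 𝒜, ∃ C ⊆ S, C.Countable ∧ C ∈ ℬ

/-- The selection principle `S₁(𝒜,ℬ)`. -/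
def SelS1 {β : Type*} (𝒜 ℬ : Set (Set β)) : Prop :=
  ∀ A : ℕ → Set β, (∀ n, A n ∈ 𝒜) →
    ∃ b : ℕ → β, (∀ n, b n ∈ A n) ∧ Set.range b ∈ ℬ

/-- The selection principle `S_fin(𝒜,ℬ)`. -/
def SelSfin {β : Type*} (𝒜 ℬ : Set (Set β)) : Prop :=
  ∀ A : ℕ → Set β, (∀ n, A n ∈ 𝒜) →
    ∃ F : ℕ → Set β, (∀ n, F n ⊆ A n ∧ (F n).Finite) ∧ (⋃ n, F n) ∈ ℬ

/-- `𝒪_X`: the family of open covers of `X`. -/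
def OpenCovers (X : Type*) [TopologicalSpace X] : Set (Set (Set X)) :=
  {𝒰 | (∀ U ∈ 𝒰, IsOpen U) ∧ ⋃₀ 𝒰 = Set.univ}

/-- ONE has a winning strategy in the point-open game on `X`. -/
def OneWinsPointOpen (X : Type*) [TopologicalSpace X] : Prop :=
  ∃ σ : List (Set X) → X, ∀ U : ℕ → Set X,
    (∀ n, IsOpen (U n) ∧ σ (GHist U n) ∈ U n) → Set.range U ∈ OpenCovers X

/-- TWO has a winning strategy in the point-open game on `X`. -/
def TwoWinsPointOpen (X : Type*) [TopologicalSpace X] : Prop :=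
  ∃ τ : List X → Set X, ∀ x : ℕ → X,
    (∀ n, IsOpen (τ (GHist x (n + 1))) ∧ x n ∈ τ (GHist x (n + 1))) ∧
    Set.range (fun n => τ (GHist x (n + 1))) ∉ OpenCovers X

/-- `𝔇_X`: the family of dense subsets of `X`. -/
def DenseSets (X : Type*) [TopologicalSpace X] : Set (Set X) :=
  {D | Dense D}

/-- ONE has a winning strategy in the point-picking game `G^D_ω(X)` of Berner and Juhász. -/
def OneWinsPointPicking (X : Type*) [TopologicalSpace X] : Prop :=
  ∃ σ : List X → Set X, (∀ h, IsOpen (σ h) ∧ (σ h).Nonempty) ∧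
    ∀ x : ℕ → X, (∀ n, x n ∈ σ (GHist x n)) → Dense (Set.range x)

/-- TWO has a winning strategy in the point-picking game `G^D_ω(X)`. -/
def TwoWinsPointPicking (X : Type*) [TopologicalSpace X] : Prop :=
  ∃ τ : List (Set X) → X, ∀ U : ℕ → Set X,
    (∀ n, IsOpen (U n) ∧ (U n).Nonempty) →
    (∀ n, τ (GHist U (n + 1)) ∈ U n) ∧
    ¬ Dense (Set.range fun n => τ (GHist U (n + 1)))

/-- `𝒟_X`: families of open sets whose union is dense in `X`. -/
def DenseUnionFams (X : Type*) [TopologicalSpace X] : Set (Set (Set X)) :=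
  {𝒰 | (∀ U ∈ 𝒰, IsOpen U) ∧ Dense (⋃₀ 𝒰)}

/-- ONE has a winning strategy in Tkachuk's game `θ(X)`. -/
def OneWinsTheta (X : Type*) [TopologicalSpace X] : Prop :=
  ∃ σ : List (Set X) → X, ∀ U : ℕ → Set X,
    (∀ n, IsOpen (U n) ∧ σ (GHist U n) ∈ U n) → Dense (⋃ n, U n)

/-- TWO has a winning strategy in Tkachuk's game `θ(X)`. -/
def TwoWinsTheta (X : Type*) [TopologicalSpace X] : Prop :=
  ∃ τ : List X → Set X, ∀ x : ℕ → X,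
    (∀ n, IsOpen (τ (GHist x (n + 1))) ∧ x n ∈ τ (GHist x (n + 1))) ∧
    ¬ Dense (⋃ n, τ (GHist x (n + 1)))

/-- `Ω_x`: the family of subsets of `X` having `x` in their closure. -/
def OmegaPt {X : Type*} [TopologicalSpace X] (x : X) : Set (Set X) :=
  {A | x ∈ closure A}

/-- ONE has a winning strategy in Gruenhage's game `G^c_{O,P}(X,x)`. -/
def OneWinsGruenhage {X : Type*} [TopologicalSpace X] (x : X) : Prop :=
  ∃ σ : List X → Set X, (∀ h, IsOpen (σ h) ∧ x ∈ σ h) ∧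
    ∀ y : ℕ → X, (∀ n, y n ∈ σ (GHist y n)) → x ∈ closure (Set.range y)

/-- TWO has a winning strategy in Gruenhage's game `G^c_{O,P}(X,x)`. -/
def TwoWinsGruenhage {X : Type*} [TopologicalSpace X] (x : X) : Prop :=
  ∃ τ : List (Set X) → X, ∀ V : ℕ → Set X,
    (∀ n, IsOpen (V n) ∧ x ∈ V n) →
    (∀ n, τ (GHist V (n + 1)) ∈ V n) ∧
    x ∉ closure (Set.range fun n => τ (GHist V (n + 1)))

/-- ONE has a winning strategy in the compact-open game on `X`. -/
def OneWinsCompactOpen (X : Type*) [TopologicalSpace X] : Prop :=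
  ∃ σ : List (Set X) → Set X, (∀ h, IsCompact (σ h)) ∧
    ∀ U : ℕ → Set X, (∀ n, IsOpen (U n) ∧ σ (GHist U n) ⊆ U n) →
      (⋃ n, U n) = Set.univ

/-- `⪯` is downwards `P`-compatible. -/
def DownwardsCompat {α β : Type*} (R : α → β → Prop) (le : β → β → Prop) : Prop :=
  ∀ a b₁ b₂, R a b₁ → R a b₂ → ∃ b, R a b ∧ le b b₁ ∧ le b b₂

/-- `⪯` is upwards `Q`-compatible. -/
def UpwardsCompat {γ β : Type*} (T : γ → β → Prop) (le : β → β → Prop) : Prop :=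
  ∀ c b₁ b₂, T c b₁ → le b₁ b₂ → T c b₂

/-- `⪯` is countably downwards `P`-compatible. -/
def CountablyDownwardsCompat {α β : Type*} (R : α → β → Prop) (le : β → β → Prop) : Prop :=
  ∀ a, ∀ E : Set β, E.Countable → E.Nonempty → (∀ b ∈ E, R a b) →
    ∃ b', R a b' ∧ ∀ b ∈ E, le b' b

/-- A relation is `ℵ₀`-preserving if some partial order on `B` is both upwards
compatible and countably downwards compatible with it. -/
def Aleph0Preserving {α β : Type*} (R : α → β → Prop) : Prop :=
  ∃ le : β → β → Prop, IsPartialOrder β le ∧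
    UpwardsCompat R le ∧ CountablyDownwardsCompat R le

/-- `Dom_γ(T)`: the γ-dominating sequences of the relation `T`. -/
def GDomGamma {γ β : Type*} (T : γ → β → Prop) : Set (ℕ → β) :=
  {z | ∀ c : γ, {n : ℕ | ¬ T c (z n)}.Finite}

/-- ONE has a winning strategy in the game `G_γ(P,Q)`. -/
def OneWinsGgamma {α β γ : Type*} (R : α → β → Prop) (T : γ → β → Prop) : Prop :=
  ∃ σ : List β → α, ∀ b : ℕ → β,
    (∀ n, R (σ (GHist b n)) (b n)) → b ∈ GDomGamma T

/-- TWO has a winning strategy in the game `G_γ(P,Q)`. -/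
def TwoWinsGgamma {α β γ : Type*} (R : α → β → Prop) (T : γ → β → Prop) : Prop :=
  ∃ τ : List α → β, ∀ a : ℕ → α,
    (∀ n, R (a n) (τ (GHist a (n + 1)))) ∧
    (fun n => τ (GHist a (n + 1))) ∉ GDomGamma T

/-- ONE has a winning strategy in the game `G₁(𝒜, Dom_γ(T))`. -/
def OneWinsG1gamma {β γ : Type*} (𝒜 : Set (Set β)) (T : γ → β → Prop) : Prop :=
  ∃ σ : List β → Set β, (∀ h, σ h ∈ 𝒜) ∧
    ∀ b : ℕ → β, (∀ n, b n ∈ σ (GHist b n)) → b ∉ GDomGamma T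

/-- TWO has a winning strategy in the game `G₁(𝒜, Dom_γ(T))`. -/
def TwoWinsG1gamma {β γ : Type*} (𝒜 : Set (Set β)) (T : γ → β → Prop) : Prop :=
  ∃ τ : List (Set β) → β, ∀ S : ℕ → Set β, (∀ n, S n ∈ 𝒜) →
    (∀ n, τ (GHist S (n + 1)) ∈ S n) ∧
    (fun n => τ (GHist S (n + 1))) ∈ GDomGamma T

/-- The `ℵ₀`-modification of a relation: moves become nonempty countable subsets of `B`,
dominated pointwise. -/
def CountMod {α β : Type*} (R : α → β → Prop) :
    α → {E : Set β // E.Countable ∧ E.Nonempty} → Prop :=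
  fun a E => ∀ b ∈ E.1, R a b

namespace St13

/-- The `a`-section of a set of pairs. -/
def gsec {α β β' : Type*} (R : α → β → Prop) (D : Set (β × β')) (a : α) : Set β' :=
  {b' | ∃ w, R a w ∧ (w, b') ∈ D}

lemma gsec_mem_GDom {α β α' β' : Type*} {R : α → β → Prop} {R' : α' → β' → Prop}
    {D : Set (β × β')} (hD : D ∈ GDom (GProd R R')) (a : α) : gsec R D a ∈ GDom R' := by
  intro a'
  obtain ⟨p, hp, h1, h2⟩ := hD (a, a')
  exact ⟨p.2, ⟨p.1, h1, by simpa using hp⟩, h2⟩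

lemma GHist_succ {β : Type*} (b : ℕ → β) (n : ℕ) :
    GHist b (n + 1) = GHist b n ++ [b n] := by
  rw [GHist, List.ofFn_succ', List.concat_eq_append]
  rfl

lemma exists_finite_lb {α β : Type*} {R : α → β → Prop} {le : β → β → Prop}
    (hR : IsTotalRel R) (hpo : IsPartialOrder β le)
    (hdown : DownwardsCompat R le) (a : α) :
    ∀ s : Set β, s.Finite → (∀ b ∈ s, R a b) → ∃ b0, R a b0 ∧ ∀ b ∈ s, le b0 b := by
  intro s hs
  refine Set.Finite.induction_on
    (motive := fun s _ => (∀ b ∈ s, R a b) → ∃ b0, R a b0 ∧ ∀ b ∈ s, le b0 b) s hs ?_ ?_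
  · intro _
    obtain ⟨b, hb⟩ := hR a
    exact ⟨b, hb, by simp⟩
  · rintro x s hx hsfin ih hmem
    obtain ⟨b0, hb0, hlb⟩ := ih (fun b hb => hmem b (Set.mem_insert_of_mem _ hb))
    obtain ⟨b1, hb1, hle1, hle2⟩ := hdown a b0 x hb0 (hmem x (Set.mem_insert _ _))
    refine ⟨b1, hb1, fun b hb => ?_⟩
    rcases Set.mem_insert_iff.mp hb with rfl | hb
    · exact hle2
    · exact hpo.toIsPreorder.toIsTrans.trans _ _ _ hle1 (hlb b hb)

/-- Responses of TWO's strategy to legal finite histories are legal finite selections. -/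
lemma resp_legal {β' : Type*} {R' : Set β' → Prop} {B : Set (Set β')}
    {τ : List (Set β') → Set β'}
    (hτ : ∀ S : ℕ → Set β', (∀ n, R' (S n)) →
      (∀ n, τ (GHist S (n + 1)) ⊆ S n ∧ (τ (GHist S (n + 1))).Finite) ∧
      (⋃ n, τ (GHist S (n + 1))) ∈ B)
    (huniv : R' Set.univ)
    (h : List (Set β')) (hh : ∀ U ∈ h, R' U) {U : Set β'} (hU : R' U) :
    τ (h ++ [U]) ⊆ U ∧ (τ (h ++ [U])).Finite := by
  classical
  set S : ℕ → Set β' := fun i =>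
    if hi : i < h.length then h[i] else if i = h.length then U else Set.univ with hSdef
  have hSmem : ∀ n, R' (S n) := by
    intro n
    by_cases h1 : n < h.length
    · simpa [hSdef, h1] using hh _ (List.getElem_mem h1)
    · by_cases h2 : n = h.length
      · simpa [hSdef, h1, h2] using hU
      · simpa [hSdef, h1, h2] using huniv
  have key := (hτ S hSmem).1 h.length
  have heq : GHist S (h.length + 1) = h ++ [U] := by
    apply List.ext_getElem
    · simp [GHist]
    · intro i h1 h2
      simp only [GHist, List.getElem_ofFn]
      by_cases hi : i < h.length
      · rw [List.getElem_append_left hi]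
        simp [hSdef, hi]
      · have hieq : i = h.length := by
          simp [GHist] at h1; omega
        subst hieq
        rw [List.getElem_append_right (le_refl _)]
        simp [hSdef]
  rw [heq] at key
  have hlast : S h.length = U := by simp [hSdef]
  rw [hlast] at key
  exact key

/-- Decoding of labels. -/
def decodeL (e : ℕ) : List (ℕ × ℕ) := Denumerable.ofNat (List (ℕ × ℕ)) e

lemma decodeL_encode (l : List (ℕ × ℕ)) : decodeL (Encodable.encode l) = l :=
  Denumerable.ofNat_encode l

/-- The history of ONE's moves encoded by a label. -/
def histOf {α β β' : Type*} (R : α → β → Prop) (D : ℕ → Set (β × β')) (g : ℕ → α)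
    (l : List (ℕ × ℕ)) : List (Set β') :=
  l.map fun q => gsec R (D q.1) (g q.2)

lemma histOf_legal {α β α' β' : Type*} {R : α → β → Prop} {R' : α' → β' → Prop}
    {D : ℕ → Set (β × β')} (hD : ∀ n, D n ∈ GDom (GProd R R')) (g : ℕ → α)
    (l : List (ℕ × ℕ)) : ∀ U ∈ histOf R D g l, U ∈ GDom R' := by
  intro U hU
  simp only [histOf, List.mem_map] at hU
  obtain ⟨q, -, rfl⟩ := hU
  exact gsec_mem_GDom (hD q.1) _

lemma histOf_append {α β β' : Type*} (R : α → β → Prop) (D : ℕ → Set (β × β')) (g : ℕ → α)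
    (l : List (ℕ × ℕ)) (q : ℕ × ℕ) :
    histOf R D g (l ++ [q]) = histOf R D g l ++ [gsec R (D q.1) (g q.2)] := by
  simp [histOf]

end St13

/-- With a partial order on `B` downwards `P`-compatible and upwards
`Q`-compatible, if TWO has a winning strategy in `G_fin(Dom(P'), Dom(Q'))` and
`S_fin(Dom(P), Dom(Q))` holds, then `S_fin(Dom(P⊗P'), Dom(Q⊗Q'))` holds. -/


theorem statement13 {α β γ α' β' γ' : Type*}
    [Nonempty α] [Nonempty γ] [Nonempty α'] [Nonempty γ']
    (R : α → β → Prop) (T : γ → β → Prop)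
    (R' : α' → β' → Prop) (T' : γ' → β' → Prop)
    (hR : IsTotalRel R) (hT : IsTotalRel T)
    (hR' : IsTotalRel R') (hT' : IsTotalRel T')
    (le : β → β → Prop) (hpo : IsPartialOrder β le)
    (hdown : DownwardsCompat R le) (hup : UpwardsCompat T le)
    (hwin : TwoWinsGfin (GDom R') (GDom T'))
    (hSfin : SelSfin (GDom R) (GDom T)) :
    SelSfin (GDom (GProd R R')) (GDom (GProd T T')) := by
  classical
  obtain ⟨τ, hτ⟩ := hwin
  intro D hD
  have a0 : α := Classical.arbitrary α
  have huniv : Set.univ ∈ GDom R' := fun a' => (hR' a').imp fun b' hb' => ⟨trivial, hb'⟩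
  have hresp : ∀ (h : List (Set β')), (∀ U ∈ h, U ∈ GDom R') → ∀ (m : ℕ) (a : α),
      τ (h ++ [St13.gsec R (D m) a]) ⊆ St13.gsec R (D m) a ∧
        (τ (h ++ [St13.gsec R (D m) a])).Finite :=
    fun h hh m a => St13.resp_legal hτ huniv h hh (St13.gsec_mem_GDom (hD m) a)
  -- choice of witnesses and a lower bound for every possible response
  have HWB : ∀ (h : List (Set β')) (m : ℕ) (a : α), ∃ p : (β' → β) × β,
      (∀ U ∈ h, U ∈ GDom R') →
      (R a p.2 ∧ ∀ b' ∈ τ (h ++ [St13.gsec R (D m) a]),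
        R a (p.1 b') ∧ (p.1 b', b') ∈ D m ∧ le p.2 (p.1 b')) := by
    intro h m a
    by_cases hh : ∀ U ∈ h, U ∈ GDom R'
    · have hr := hresp h hh m a
      have hw : ∀ b' : β', ∃ w : β,
          b' ∈ τ (h ++ [St13.gsec R (D m) a]) → R a w ∧ (w, b') ∈ D m := by
        intro b'
        by_cases hb' : b' ∈ τ (h ++ [St13.gsec R (D m) a])
        · obtain ⟨w, hw1, hw2⟩ := hr.1 hb'
          exact ⟨w, fun _ => ⟨hw1, hw2⟩⟩
        · exact ⟨(hR a).choose, fun hcon => absurd hcon hb'⟩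
      choose W hW using hw
      obtain ⟨b0, hb0, hlb⟩ := St13.exists_finite_lb hR hpo hdown a
        (W '' τ (h ++ [St13.gsec R (D m) a])) (hr.2.image W)
        (by rintro b ⟨b', hb', rfl⟩; exact (hW b' hb').1)
      exact ⟨(W, b0), fun _ => ⟨hb0, fun b' hb' =>
        ⟨(hW b' hb').1, (hW b' hb').2, hlb _ (Set.mem_image_of_mem W hb')⟩⟩⟩
    · obtain ⟨b, hb⟩ := hR a
      exact ⟨(fun _ => b, b), fun hcon => absurd hcon hh⟩
  choose WB hWB using HWB
  -- one application of S_fin per treated node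
  have HT : ∀ (h : List (Set β')) (ms : ℕ → ℕ), ∃ sa : ℕ → Set α,
      (∀ i, (sa i).Finite) ∧
      ((∀ U ∈ h, U ∈ GDom R') → ∀ c : γ, ∃ i, ∃ a ∈ sa i, T c (WB h (ms i) a).2) := by
    intro h ms
    by_cases hh : ∀ U ∈ h, U ∈ GDom R'
    · obtain ⟨Fs, hFs, hFsT⟩ := hSfin (fun i => Set.range fun a => (WB h (ms i) a).2)
        (fun i a => ⟨(WB h (ms i) a).2, Set.mem_range_self a, (hWB h (ms i) a hh).1⟩)
      have hpre : ∀ (i : ℕ) (b : β), ∃ a : α, b ∈ Fs i → (WB h (ms i) a).2 = b := by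
        intro i b
        by_cases hb : b ∈ Fs i
        · obtain ⟨a, ha⟩ := (hFs i).1 hb
          exact ⟨a, fun _ => ha⟩
        · exact ⟨a0, fun hcon => absurd hcon hb⟩
      choose pk hpk using hpre
      refine ⟨fun i => pk i '' Fs i, fun i => ((hFs i).2.image _), fun _ c => ?_⟩
      obtain ⟨b, hb, hTcb⟩ := hFsT c
      rw [Set.mem_iUnion] at hb
      obtain ⟨i, hb⟩ := hb
      exact ⟨i, pk i b, Set.mem_image_of_mem _ hb, by rw [hpk i b hb]; exact hTcb⟩
    · exact ⟨fun _ => ∅, fun _ => Set.finite_empty, fun hcon => absurd hcon hh⟩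
  choose SA hSAfin hSAcov using HT
  -- enumerations of finite sets
  have HEnum : ∀ s : Set α, ∃ f : ℕ → α, s.Finite → ∀ a ∈ s, ∃ k, f k = a := by
    intro s
    by_cases hs : s.Finite
    · refine ⟨fun k => hs.toFinset.toList.getD k a0, fun _ a ha => ?_⟩
      have h1 : a ∈ hs.toFinset.toList := by simp [ha]
      obtain ⟨k, hk, hget⟩ := List.mem_iff_getElem.mp h1
      refine ⟨k, ?_⟩
      show hs.toFinset.toList.getD k a0 = a
      rw [List.getD_eq_getElem _ _ hk]
      exact hget
    · exact ⟨fun _ => a0, fun hcon => absurd hcon hs⟩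
  choose ENum hENum using HEnum
  -- the rounds of the construction
  obtain ⟨G, hGsucc⟩ : ∃ G : ℕ → ℕ → α, ∀ r n, G (r + 1) n =
      if n.unpair.1 = 0 then G r n.unpair.2
      else ENum (SA (St13.histOf R D (G r) (St13.decodeL (n.unpair.1 - 1)))
        (fun i => Nat.pair (Nat.pair r (n.unpair.1 - 1)) i) n.unpair.2.unpair.1)
        n.unpair.2.unpair.2 :=
    ⟨fun r => Nat.rec (fun _ => a0) (fun r' ih n =>
      if n.unpair.1 = 0 then ih n.unpair.2
      else ENum (SA (St13.histOf R D ih (St13.decodeL (n.unpair.1 - 1)))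
        (fun i => Nat.pair (Nat.pair r' (n.unpair.1 - 1)) i) n.unpair.2.unpair.1)
        n.unpair.2.unpair.2) r, fun r n => rfl⟩
  have hmono : ∀ r r₂, r ≤ r₂ → ∀ p, ∃ q, G r₂ q = G r p := by
    intro r r₂ hle
    induction r₂, hle using Nat.le_induction with
    | base => exact fun p => ⟨p, rfl⟩
    | succ n hn ih =>
      intro p
      obtain ⟨q, hq⟩ := ih p
      refine ⟨Nat.pair 0 q, ?_⟩
      rw [hGsucc]
      simp [Nat.unpair_pair, hq]
  have hsel_range : ∀ (r e i : ℕ) (a : α),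
      a ∈ SA (St13.histOf R D (G r) (St13.decodeL e)) (fun j => Nat.pair (Nat.pair r e) j) i →
      ∃ r' q, G r' q = a := by
    intro r e i a ha
    obtain ⟨k, hk⟩ := hENum _ (hSAfin _ _ i) a ha
    refine ⟨r + 1, Nat.pair (e + 1) (Nat.pair i k), ?_⟩
    rw [hGsucc]
    simp only [Nat.unpair_pair]
    rw [if_neg (by omega)]
    simpa using hk
  -- the final selection
  refine ⟨fun m => ⋃ a ∈ SA
      (St13.histOf R D (G m.unpair.1.unpair.1) (St13.decodeL m.unpair.1.unpair.2))
      (fun j => Nat.pair m.unpair.1 j) m.unpair.2,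
    (fun b' => ((WB (St13.histOf R D (G m.unpair.1.unpair.1)
        (St13.decodeL m.unpair.1.unpair.2)) m a).1 b', b')) ''
      τ (St13.histOf R D (G m.unpair.1.unpair.1) (St13.decodeL m.unpair.1.unpair.2) ++
        [St13.gsec R (D m) a]), ?_, ?_⟩
  · intro m
    constructor
    · rintro p hp
      simp only [Set.mem_iUnion] at hp
      obtain ⟨a, ha, b'', hb'', heq⟩ := hp
      rw [← heq]
      exact ((hWB _ m a (St13.histOf_legal hD _ _)).2 b'' hb'').2.1
    · refine Set.Finite.biUnion (hSAfin _ _ _) fun a ha => ?_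
      exact ((hresp _ (St13.histOf_legal hD _ _) m a).2.image _)
  · rintro ⟨c, c'⟩
    -- Claim A: there is a node all whose one-step extensions by generated points cover c'
    have claimA : ∃ (r : ℕ) (l : List (ℕ × ℕ)), ∀ (m : ℕ) (a : α), (∃ r' q, G r' q = a) →
        ∃ b' ∈ τ (St13.histOf R D (G r) l ++ [St13.gsec R (D m) a]), T' c' b' := by
      by_contra hcon
      push_neg at hcon
      have step : ∀ (r : ℕ) (l : List (ℕ × ℕ)), ∃ (r₂ : ℕ) (l₂ : List (ℕ × ℕ)) (U : Set β'), U ∈ GDom R' ∧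
          St13.histOf R D (G r₂) l₂ = St13.histOf R D (G r) l ++ [U] ∧
          ∀ b' ∈ τ (St13.histOf R D (G r) l ++ [U]), ¬ T' c' b' := by
        intro r l
        obtain ⟨m, a, ⟨r', p, hp⟩, hmiss⟩ := hcon r l
        have hreidx : ∀ t : List (ℕ × ℕ), ∃ t₂,
            St13.histOf R D (G (max r r')) t₂ = St13.histOf R D (G r) t := by
          intro t
          induction t with
          | nil => exact ⟨[], rfl⟩
          | cons q t ih =>
            obtain ⟨t₂, ht₂⟩ := ih
            obtain ⟨p₂, hp₂⟩ := hmono r (max r r') (le_max_left _ _) q.2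
            refine ⟨(q.1, p₂) :: t₂, ?_⟩
            simp only [St13.histOf, List.map_cons] at ht₂ ⊢
            rw [hp₂]
            exact congrArg _ ht₂
        obtain ⟨l₁, hl₁⟩ := hreidx l
        obtain ⟨q, hq⟩ := hmono r' (max r r') (le_max_right _ _) p
        refine ⟨max r r', l₁ ++ [(m, q)], St13.gsec R (D m) a,
          St13.gsec_mem_GDom (hD m) a, ?_, hmiss⟩
        rw [St13.histOf_append, hl₁, hq, hp]
      choose stepR stepL stepU hstepU hstepEq hstepMiss using step
      obtain ⟨seq, hseq0, hseqS⟩ : ∃ seq : ℕ → ℕ × List (ℕ × ℕ), seq 0 = (0, []) ∧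
          ∀ n, seq (n + 1) = (stepR (seq n).1 (seq n).2, stepL (seq n).1 (seq n).2) :=
        ⟨fun n => Nat.rec ((0 : ℕ), ([] : List (ℕ × ℕ)))
          (fun _ pr => (stepR pr.1 pr.2, stepL pr.1 pr.2)) n, rfl, fun n => rfl⟩
      set hist : ℕ → List (Set β') := fun n => St13.histOf R D (G (seq n).1) (seq n).2
        with hhist
      set mv : ℕ → Set β' := fun n => stepU (seq n).1 (seq n).2 with hmv
      have hseqEq : ∀ n, hist (n + 1) = hist n ++ [mv n] := by
        intro n
        have := hstepEq (seq n).1 (seq n).2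
        simp only [hhist, hmv, hseqS n]
        exact this
      have hGH : ∀ n, GHist mv n = hist n := by
        intro n
        induction n with
        | zero => simp [GHist, hhist, hseq0, St13.histOf]
        | succ k ih => rw [St13.GHist_succ, ih, hseqEq k]
      have hall := hτ mv (fun n => hstepU (seq n).1 (seq n).2)
      obtain ⟨b', hb', hT'⟩ := hall.2 c'
      rw [Set.mem_iUnion] at hb'
      obtain ⟨n, hb'⟩ := hb'
      rw [hGH (n + 1), hseqEq n] at hb'
      exact hstepMiss (seq n).1 (seq n).2 b' hb' hT'
    obtain ⟨r, l0, hGood⟩ := claimA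
    have hl : St13.decodeL (Encodable.encode l0) = l0 := St13.decodeL_encode l0
    have hGood' : ∀ (m : ℕ) (a : α), (∃ r' q, G r' q = a) →
        ∃ b' ∈ τ (St13.histOf R D (G r) (St13.decodeL (Encodable.encode l0)) ++
          [St13.gsec R (D m) a]), T' c' b' := by
      rw [hl]; exact hGood
    obtain ⟨i, a, hai, hTc⟩ := hSAcov
      (St13.histOf R D (G r) (St13.decodeL (Encodable.encode l0)))
      (fun j => Nat.pair (Nat.pair r (Encodable.encode l0)) j)
      (St13.histOf_legal hD _ _) c
    have haR : ∃ r' q, G r' q = a := hsel_range r (Encodable.encode l0) i a hai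
    obtain ⟨b', hb', hT'⟩ :=
      hGood' (Nat.pair (Nat.pair r (Encodable.encode l0)) i) a haR
    refine ⟨((WB (St13.histOf R D (G r) (St13.decodeL (Encodable.encode l0)))
        (Nat.pair (Nat.pair r (Encodable.encode l0)) i) a).1 b', b'), ?_, ?_, hT'⟩
    · rw [Set.mem_iUnion]
      refine ⟨Nat.pair (Nat.pair r (Encodable.encode l0)) i, ?_⟩
      simp only [Nat.unpair_pair]
      exact Set.mem_biUnion hai (Set.mem_image_of_mem _ hb')
    · exact hup c _ _ hTc
        ((hWB _ (Nat.pair (Nat.pair r (Encodable.encode l0)) i) a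
          (St13.histOf_legal hD _ _)).2 b' hb').2.2
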